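/- The function ξ(k; s) = (1/Γ(s)) ∫_0^∞ t^{s-1} Li_k(1 − e^{−t})/(e^t − 1) dt, defined for Re(s) > 1 with Li_k the classical polylogarithm (k ≥ 1 an integer), satisfies ξ(k; 1) = ζ(k+1). -/

import Mathlib

open scoped BigOperators

/-- The multiple zeta value ζ(k₁,…,k_r) = ∑_{0<m₁<⋯<m_r} ∏ 1/m_i^{k_i}. -/
noncomputable def mzeta (ks : List ℕ) : ℝ :=
  ∑' f : {f : Fin ks.length → ℕ+ // StrictMono f},
    ∏ i : Fin ks.length, (1 : ℝ) / ((f.1 i : ℕ) : ℝ) ^ ks.get i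

/-- The multiple zeta-star value ζ*(k₁,…,k_r) = ∑_{0<m₁≤⋯≤m_r} ∏ 1/m_i^{k_i}. -/
noncomputable def mzetaStar (ks : List ℕ) : ℝ :=
  ∑' f : {f : Fin ks.length → ℕ+ // Monotone f},
    ∏ i : Fin ks.length, (1 : ℝ) / ((f.1 i : ℕ) : ℝ) ^ ks.get i

/-- The polylogarithm Li_k(z) = ∑_{m≥1} z^m/m^k. -/
noncomputable def Li (k : ℕ) (z : ℝ) : ℝ := ∑' m : ℕ+, z ^ (m : ℕ) / ((m : ℕ) : ℝ) ^ k

open MeasureTheory Set Filter in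
lemma xi_hasDerivAt_aux (n : ℕ) (x : ℝ) :
    HasDerivAt (fun t => (1 - Real.exp (-t)) ^ (n + 1) / ((n : ℝ) + 1))
      ((1 - Real.exp (-x)) ^ n * Real.exp (-x)) x := by
  have h1 : HasDerivAt (fun t : ℝ => Real.exp (-t)) (-Real.exp (-x)) x := by
    simpa [Function.comp_def] using (Real.hasDerivAt_exp (-x)).comp x ((hasDerivAt_id x).neg)
  have h2 : HasDerivAt (fun t : ℝ => 1 - Real.exp (-t)) (Real.exp (-x)) x := by
    simpa using h1.const_sub 1
  have h3 := (h2.pow (n + 1)).div_const ((n : ℝ) + 1)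
  refine h3.congr_deriv ?_
  have hne : ((n : ℝ) + 1) ≠ 0 := by positivity
  rw [Nat.add_sub_cancel]
  push_cast
  rw [mul_assoc, mul_div_right_comm, div_self hne, one_mul]

open MeasureTheory Set Filter Topology in
lemma xi_integral_aux (n : ℕ) :
    IntegrableOn (fun t => (1 - Real.exp (-t)) ^ n * Real.exp (-t)) (Ioi (0 : ℝ)) ∧
    (∫ t in Ioi (0 : ℝ), (1 - Real.exp (-t)) ^ n * Real.exp (-t)) = 1 / ((n : ℝ) + 1) := by
  have hd : ∀ x ∈ Ici (0 : ℝ),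
      HasDerivAt (fun t => (1 - Real.exp (-t)) ^ (n + 1) / ((n : ℝ) + 1))
        ((1 - Real.exp (-x)) ^ n * Real.exp (-x)) x := fun x _ => xi_hasDerivAt_aux n x
  have hpos : ∀ x ∈ Ioi (0 : ℝ), 0 ≤ (1 - Real.exp (-x)) ^ n * Real.exp (-x) := by
    intro x hx
    have h1 : Real.exp (-x) ≤ 1 := Real.exp_le_one_iff.mpr (by simpa using hx.out.le)
    have h2 : (0:ℝ) ≤ 1 - Real.exp (-x) := by linarith
    positivity
  have hlim : Tendsto (fun t => (1 - Real.exp (-t)) ^ (n + 1) / ((n : ℝ) + 1)) atTop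
      (𝓝 (1 / ((n : ℝ) + 1))) := by
    have h1 : Tendsto (fun t : ℝ => 1 - Real.exp (-t)) atTop (𝓝 1) := by
      simpa using (tendsto_const_nhds.sub Real.tendsto_exp_neg_atTop_nhds_zero)
    simpa using (h1.pow (n + 1)).div_const ((n : ℝ) + 1)
  refine ⟨integrableOn_Ioi_deriv_of_nonneg' hd hpos hlim, ?_⟩
  rw [integral_Ioi_of_hasDerivAt_of_nonneg' hd hpos hlim]
  simp

/-- ξ(k; 1) = ζ(k+1), where ξ(k; s) = (1/Γ(s)) ∫₀^∞ t^{s−1} Li_k(1−e^{−t})/(eᵗ−1) dt. -/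
theorem xi_at_one (k : ℕ) (hk : 1 ≤ k) :
    (Real.Gamma 1)⁻¹ *
        ∫ t in Set.Ioi (0 : ℝ),
          t ^ ((1 : ℝ) - 1) * (Li k (1 - Real.exp (-t)) / (Real.exp t - 1)) =
      ∑' m : ℕ+, 1 / ((m : ℕ) : ℝ) ^ (k + 1) := by
  classical
  rw [Real.Gamma_one, inv_one, one_mul]
  set g : ℕ+ → ℝ → ℝ := fun m t =>
    (1 - Real.exp (-t)) ^ ((m : ℕ) - 1) * Real.exp (-t) / ((m : ℕ) : ℝ) ^ k with hg
  -- pointwise identity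
  have key : ∀ t ∈ Set.Ioi (0 : ℝ),
      t ^ ((1 : ℝ) - 1) * (Li k (1 - Real.exp (-t)) / (Real.exp t - 1)) = ∑' m : ℕ+, g m t := by
    intro t ht
    have ht' : (0 : ℝ) < t := ht
    rw [sub_self, Real.rpow_zero, one_mul, Li, ← tsum_div_const]
    refine tsum_congr fun m => ?_
    simp only [hg]
    have hz : (0 : ℝ) < 1 - Real.exp (-t) := by
      have : Real.exp (-t) < 1 := Real.exp_lt_one_iff.mpr (by linarith)
      linarith
    have hexp : Real.exp t ≠ 0 := (Real.exp_pos t).ne'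
    have he : Real.exp t - 1 = (1 - Real.exp (-t)) * Real.exp t := by
      rw [sub_mul, one_mul, Real.exp_neg, inv_mul_cancel₀ hexp]
    have hm : (m : ℕ) = ((m : ℕ) - 1) + 1 := (Nat.succ_pred_eq_of_pos m.pos).symm
    have hmk : (((m : ℕ) : ℝ)) ^ k ≠ 0 := by positivity
    set z := 1 - Real.exp (-t) with hzdef
    have hzne : z ≠ 0 := ne_of_gt hz
    have hpow : z ^ (m : ℕ) = z ^ ((m : ℕ) - 1) * z := by
      conv_lhs => rw [hm]
      rw [pow_succ]
    rw [div_div, he, hpow, Real.exp_neg]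
    field_simp
  rw [MeasureTheory.setIntegral_congr_fun measurableSet_Ioi key]
  -- integrability and value of each term
  have hint : ∀ m : ℕ+, MeasureTheory.Integrable (g m)
      (MeasureTheory.volume.restrict (Set.Ioi (0 : ℝ))) := by
    intro m
    exact ((xi_integral_aux ((m : ℕ) - 1)).1.div_const _)
  have hval : ∀ m : ℕ+, (∫ t in Set.Ioi (0 : ℝ), g m t) = 1 / ((m : ℕ) : ℝ) ^ (k + 1) := by
    intro m
    have h1 : (∫ t in Set.Ioi (0 : ℝ), g m t)
        = (∫ t in Set.Ioi (0 : ℝ),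
            (1 - Real.exp (-t)) ^ ((m : ℕ) - 1) * Real.exp (-t)) / ((m : ℕ) : ℝ) ^ k := by
      simp only [hg]
      exact MeasureTheory.integral_div _ _
    rw [h1, (xi_integral_aux ((m : ℕ) - 1)).2]
    have hm : ((((m : ℕ) - 1 : ℕ) : ℝ) + 1) = ((m : ℕ) : ℝ) := by
      exact_mod_cast congrArg (fun n : ℕ => (n : ℝ)) (Nat.succ_pred_eq_of_pos m.pos)
    rw [hm, pow_succ, div_div, mul_comm]
  -- nonnegativity ⇒ norm integral equals integral
  have hnorm : ∀ m : ℕ+,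
      (∫ t in Set.Ioi (0 : ℝ), ‖g m t‖) = 1 / ((m : ℕ) : ℝ) ^ (k + 1) := by
    intro m
    rw [← hval m]
    refine MeasureTheory.setIntegral_congr_fun measurableSet_Ioi fun t ht => ?_
    have h1 : Real.exp (-t) ≤ 1 := Real.exp_le_one_iff.mpr (by simpa using ht.out.le)
    have h2 : (0:ℝ) ≤ 1 - Real.exp (-t) := by linarith
    have : 0 ≤ g m t := by rw [hg]; positivity
    exact Real.norm_of_nonneg this
  have hsum : Summable fun m : ℕ+ => ∫ t in Set.Ioi (0 : ℝ), ‖g m t‖ := by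
    rw [show (fun m : ℕ+ => ∫ t in Set.Ioi (0 : ℝ), ‖g m t‖)
        = fun m : ℕ+ => 1 / ((m : ℕ) : ℝ) ^ (k + 1) from funext hnorm]
    have h1 : Summable fun n : ℕ => 1 / (n : ℝ) ^ (k + 1) :=
      Real.summable_one_div_nat_pow.mpr (by omega)
    exact h1.comp_injective PNat.coe_injective
  rw [← MeasureTheory.integral_tsum_of_summable_integral_norm hint hsum]
  exact tsum_congr hval
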